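/- arXiv:1112.3941 — 4 statements merged into one kernel-verified Lean document; each statement's English description precedes it below -/
import Mathlib

section
/- Let K(x) = α₀ + α₁x + ⋯ + α_s x^s be a real polynomial with all coefficients α_j ≥ 0 and not all zero, and assume K is strictly increasing on the positive integers. Then for every integer Q ≥ 2, the sum of K(q) over all prime powers q with 2 ≤ q ≤ Q satisfies Σ_{q ≤ Q, q a prime power} K(q) < K(Q) + (1/2)·∫₀^Q K(x) dx + α₀·log₂ Q + Σ_{j=1}^{s} 2^j·α_j·Q^j/(2^j − 1). -/
open Finset intervalIntegral

theorem primePow_sum_lt_of_polynomial (s : ℕ) (α : ℕ → ℝ)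
    (hα : ∀ j, j ≤ s → 0 ≤ α j) (hne : ∃ j, j ≤ s ∧ α j ≠ 0)
    (K : ℝ → ℝ) (hKdef : K = fun x => ∑ j ∈ Finset.range (s + 1), α j * x ^ j)
    (hmono : ∀ a b : ℕ, 0 < a → a < b → K a < K b)
    (Q : ℕ) (hQ : 2 ≤ Q) :
    ∑ q ∈ (Finset.Icc 2 Q).filter IsPrimePow, K q <
      K Q + (1 / 2) * (∫ x in (0 : ℝ)..(Q : ℝ), K x) + α 0 * Real.logb 2 Q +
        ∑ j ∈ Finset.Icc 1 s, 2 ^ j * α j * (Q : ℝ) ^ j / (2 ^ j - 1) := by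
  -- Basic properties of K
  have hK0 : ∀ x : ℝ, 0 ≤ x → 0 ≤ K x := by
    intro x hx
    rw [hKdef]
    exact Finset.sum_nonneg fun j hj =>
      mul_nonneg (hα j (Nat.lt_succ_iff.mp (Finset.mem_range.mp hj))) (pow_nonneg hx j)
  have hKmono : ∀ x y : ℝ, 0 ≤ x → x ≤ y → K x ≤ K y := by
    intro x y hx hxy
    rw [hKdef]
    exact Finset.sum_le_sum fun j hj =>
      mul_le_mul_of_nonneg_left (pow_le_pow_left₀ hx hxy j)
        (hα j (Nat.lt_succ_iff.mp (Finset.mem_range.mp hj)))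
  have hKcont : Continuous K := by
    rw [hKdef]; continuity
  have hKint : ∀ a b : ℝ, IntervalIntegrable K MeasureTheory.volume a b :=
    fun a b => hKcont.intervalIntegrable a b
  have hKleQ : ∀ n : ℕ, 0 < n → n ≤ Q → K n ≤ K Q := by
    intro n hn hnQ
    rcases eq_or_lt_of_le hnQ with h | h
    · rw [h]
    · exact (hmono n Q hn h).le
  -- some positive coefficient with j ≥ 1
  have hj0 : ∃ j0, 1 ≤ j0 ∧ j0 ≤ s ∧ 0 < α j0 := by
    by_contra hcon
    push_neg at hcon
    have hzero : ∀ j, 1 ≤ j → j ≤ s → α j = 0 := fun j h1 h2 =>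
      le_antisymm (hcon j h1 h2) (hα j h2)
    have hconst : ∀ x : ℝ, K x = α 0 := by
      intro x
      rw [hKdef]
      simp only
      rw [Finset.sum_eq_single 0]
      · simp
      · intro j hj hjne
        rw [hzero j (Nat.one_le_iff_ne_zero.mpr hjne)
          (Nat.lt_succ_iff.mp (Finset.mem_range.mp hj))]
        ring
      · intro h
        exact absurd (Finset.mem_range.mpr (Nat.succ_pos s)) h
    have := hmono 1 2 one_pos one_lt_two
    rw [hconst, hconst] at this
    exact lt_irrefl _ this
  set L := Nat.log 2 Q with hL
  set M := (Q - 3) / 2 with hM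
  have hQ0 : Q ≠ 0 := by omega
  have h2L : (2:ℕ) ^ L ≤ Q := Nat.pow_log_le_self 2 hQ0
  -- split the sum into even and odd prime powers
  rw [← Finset.sum_filter_add_sum_filter_not ((Finset.Icc 2 Q).filter IsPrimePow)
    (fun q => Even q)]
  -- Even part
  have hEven :
      ∑ q ∈ ((Finset.Icc 2 Q).filter IsPrimePow).filter (fun q => Even q), K q <
        α 0 * Real.logb 2 Q +
          ∑ j ∈ Finset.Icc 1 s, 2 ^ j * α j * (Q : ℝ) ^ j / (2 ^ j - 1) := by
    have hsub : ((Finset.Icc 2 Q).filter IsPrimePow).filter (fun q => Even q) ⊆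
        (Finset.Icc 1 L).image (fun k => 2 ^ k) := by
      intro q hq
      simp only [Finset.mem_filter, Finset.mem_Icc] at hq
      obtain ⟨⟨⟨h2q, hqQ⟩, hpp⟩, heven⟩ := hq
      obtain ⟨p, k, hp, hk, rfl⟩ := hpp
      have hpN : Nat.Prime p := Nat.prime_iff.mpr hp
      have hdvd : (2:ℕ) ∣ p ^ k := even_iff_two_dvd.mp heven
      have hp2 : p = 2 :=
        ((Nat.prime_dvd_prime_iff_eq Nat.prime_two hpN).mp
          (Nat.Prime.dvd_of_dvd_pow Nat.prime_two hdvd)).symm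
      subst hp2
      refine Finset.mem_image.mpr ⟨k, Finset.mem_Icc.mpr ⟨hk, ?_⟩, rfl⟩
      exact (Nat.le_log_iff_pow_le one_lt_two hQ0).mpr hqQ
    have h1 : ∑ q ∈ ((Finset.Icc 2 Q).filter IsPrimePow).filter (fun q => Even q), K q ≤
        ∑ k ∈ Finset.Icc 1 L, K ((2 ^ k : ℕ) : ℝ) := by
      calc ∑ q ∈ ((Finset.Icc 2 Q).filter IsPrimePow).filter (fun q => Even q), K q
          ≤ ∑ q ∈ ((Finset.Icc 1 L).image (fun k => 2 ^ k) : Finset ℕ), K q :=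
            Finset.sum_le_sum_of_subset_of_nonneg hsub
              (fun q _ _ => hK0 q (Nat.cast_nonneg q))
        _ = ∑ k ∈ Finset.Icc 1 L, K ((2 ^ k : ℕ) : ℝ) :=
            Finset.sum_image (fun x _ y _ h => Nat.pow_right_injective le_rfl h)
    -- expand the sum of K over powers of two
    have hswap : ∑ k ∈ Finset.Icc 1 L, K ((2 ^ k : ℕ) : ℝ) =
        ∑ j ∈ Finset.range (s + 1), α j * ∑ k ∈ Finset.Icc 1 L, ((2:ℝ) ^ j) ^ k := by
      rw [hKdef]
      simp only
      rw [Finset.sum_comm]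
      refine Finset.sum_congr rfl fun j _ => ?_
      rw [Finset.mul_sum]
      refine Finset.sum_congr rfl fun k _ => ?_
      congr 1
      push_cast
      rw [← pow_mul, ← pow_mul, Nat.mul_comm]
    have hsplit : ∑ j ∈ Finset.range (s + 1),
          (α j * ∑ k ∈ Finset.Icc 1 L, ((2:ℝ) ^ j) ^ k) =
        α 0 * L + ∑ j ∈ Finset.Icc 1 s, α j * ∑ k ∈ Finset.Icc 1 L, ((2:ℝ) ^ j) ^ k := by
      rw [Finset.sum_range_succ']
      rw [add_comm]
      congr 1
      · simp [Finset.sum_const, Nat.card_Icc]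
      · rw [← Finset.Ico_add_one_right_eq_Icc 1 s, Finset.sum_Ico_eq_sum_range]
        simp only [Nat.succ_sub_one, Nat.add_sub_cancel, Nat.add_comm 1]
    -- geometric sum bound for each j ≥ 1
    have hgb : ∀ j ∈ Finset.Icc 1 s,
        α j * ∑ k ∈ Finset.Icc 1 L, ((2:ℝ) ^ j) ^ k ≤
          2 ^ j * α j * (Q : ℝ) ^ j / (2 ^ j - 1) ∧
        (0 < α j →
          α j * ∑ k ∈ Finset.Icc 1 L, ((2:ℝ) ^ j) ^ k <
            2 ^ j * α j * (Q : ℝ) ^ j / (2 ^ j - 1)) := by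
      intro j hj
      obtain ⟨hj1, hjs⟩ := Finset.mem_Icc.mp hj
      have hr2 : (2:ℝ) ≤ 2 ^ j := by
        calc (2:ℝ) = 2 ^ 1 := (pow_one 2).symm
        _ ≤ 2 ^ j := pow_le_pow_right₀ one_le_two hj1
      have hr1 : (1:ℝ) < 2 ^ j := by linarith
      have hrne : ((2:ℝ) ^ j) ≠ 1 := by linarith
      have hgeo : ∑ k ∈ Finset.Icc 1 L, ((2:ℝ) ^ j) ^ k =
          (((2:ℝ) ^ j) ^ (L + 1) - 2 ^ j) / (2 ^ j - 1) := by
        rw [← Finset.Ico_add_one_right_eq_Icc 1 L, geom_sum_Ico hrne (by omega)]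
        rw [pow_one]
      have hQj : ((2:ℝ) ^ j) ^ L ≤ (Q : ℝ) ^ j := by
        rw [pow_right_comm]
        refine pow_le_pow_left₀ (by positivity) ?_ j
        exact_mod_cast h2L
      have hnum : ((2:ℝ) ^ j) ^ (L + 1) - 2 ^ j < 2 ^ j * (Q : ℝ) ^ j := by
        have : ((2:ℝ) ^ j) ^ (L + 1) = ((2:ℝ) ^ j) ^ L * 2 ^ j := by ring
        nlinarith [hQj, hr2]
      have hden : (0:ℝ) < 2 ^ j - 1 := by linarith
      have hαj : 0 ≤ α j := hα j hjs
      constructor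
      · rw [hgeo]
        rw [show α j * ((((2:ℝ) ^ j) ^ (L + 1) - 2 ^ j) / (2 ^ j - 1)) =
            (α j * (((2:ℝ) ^ j) ^ (L + 1) - 2 ^ j)) / (2 ^ j - 1) from by ring]
        apply (div_le_div_iff_of_pos_right hden).mpr
        nlinarith [hnum, hαj]
      · intro hpos
        rw [hgeo]
        rw [show α j * ((((2:ℝ) ^ j) ^ (L + 1) - 2 ^ j) / (2 ^ j - 1)) =
            (α j * (((2:ℝ) ^ j) ^ (L + 1) - 2 ^ j)) / (2 ^ j - 1) from by ring]
        apply (div_lt_div_iff_of_pos_right hden).mpr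
        nlinarith [hnum, hpos]
    have hsum_lt : ∑ j ∈ Finset.Icc 1 s, α j * ∑ k ∈ Finset.Icc 1 L, ((2:ℝ) ^ j) ^ k <
        ∑ j ∈ Finset.Icc 1 s, 2 ^ j * α j * (Q : ℝ) ^ j / (2 ^ j - 1) := by
      obtain ⟨j0, hj01, hj0s, hj0pos⟩ := hj0
      refine Finset.sum_lt_sum (fun j hj => (hgb j hj).1) ⟨j0, Finset.mem_Icc.mpr ⟨hj01, hj0s⟩, ?_⟩
      exact (hgb j0 (Finset.mem_Icc.mpr ⟨hj01, hj0s⟩)).2 hj0pos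
    have hlogb : (L : ℝ) ≤ Real.logb 2 Q := by
      have h1 : ((2:ℝ)) ^ L ≤ (Q : ℝ) := by exact_mod_cast h2L
      calc (L : ℝ) = Real.logb 2 ((2:ℝ) ^ L) := by
            rw [Real.logb_pow, Real.logb_self_eq_one one_lt_two]; ring
        _ ≤ Real.logb 2 (Q : ℝ) :=
            Real.logb_le_logb_of_le one_lt_two (by positivity) h1
    have hα0 : 0 ≤ α 0 := hα 0 (Nat.zero_le s)
    calc ∑ q ∈ ((Finset.Icc 2 Q).filter IsPrimePow).filter (fun q => Even q), K q
        ≤ ∑ k ∈ Finset.Icc 1 L, K ((2 ^ k : ℕ) : ℝ) := h1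
      _ = α 0 * L + ∑ j ∈ Finset.Icc 1 s, α j * ∑ k ∈ Finset.Icc 1 L, ((2:ℝ) ^ j) ^ k := by
          rw [hswap, hsplit]
      _ < α 0 * Real.logb 2 Q +
          ∑ j ∈ Finset.Icc 1 s, 2 ^ j * α j * (Q : ℝ) ^ j / (2 ^ j - 1) := by
          have := mul_le_mul_of_nonneg_left hlogb hα0
          linarith [hsum_lt]
  -- Odd part
  have hOdd :
      ∑ q ∈ ((Finset.Icc 2 Q).filter IsPrimePow).filter (fun q => ¬ Even q), K q ≤
        K Q + (1 / 2) * (∫ x in (0 : ℝ)..(Q : ℝ), K x) := by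
    set T := (Finset.Icc 3 Q).filter (fun n => ¬ Even n) with hT
    have hOsub : ((Finset.Icc 2 Q).filter IsPrimePow).filter (fun q => ¬ Even q) ⊆ T := by
      intro q hq
      simp only [hT, Finset.mem_filter, Finset.mem_Icc] at hq ⊢
      obtain ⟨⟨⟨h2, hQ'⟩, _⟩, hodd⟩ := hq
      have hm := Nat.not_even_iff.mp hodd
      exact ⟨⟨by omega, hQ'⟩, hodd⟩
    have h1 : ∑ q ∈ ((Finset.Icc 2 Q).filter IsPrimePow).filter (fun q => ¬ Even q), K q ≤
        ∑ n ∈ T, K n :=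
      Finset.sum_le_sum_of_subset_of_nonneg hOsub (fun n _ _ => hK0 n (Nat.cast_nonneg n))
    -- the at most one odd number exceeding Q - 2
    have hT2 : ∑ n ∈ T.filter (fun n => ¬ n ≤ Q - 2), K n ≤ K Q := by
      have hcard : (T.filter (fun n => ¬ n ≤ Q - 2)).card ≤ 1 := by
        rw [Finset.card_le_one]
        intro u hu v hv
        simp only [hT, Finset.mem_filter, Finset.mem_Icc] at hu hv
        have hu2 := Nat.not_even_iff.mp hu.1.2
        have hv2 := Nat.not_even_iff.mp hv.1.2
        omega
      have hle : ∀ n ∈ T.filter (fun n => ¬ n ≤ Q - 2), K n ≤ K Q := by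
        intro n hn
        simp only [hT, Finset.mem_filter, Finset.mem_Icc] at hn
        exact hKleQ n (by omega) hn.1.1.2
      calc ∑ n ∈ T.filter (fun n => ¬ n ≤ Q - 2), K n
          ≤ (T.filter (fun n => ¬ n ≤ Q - 2)).card • K Q :=
            Finset.sum_le_card_nsmul _ _ _ hle
        _ ≤ K Q := by
            rw [nsmul_eq_mul]
            have hc : ((T.filter (fun n => ¬ n ≤ Q - 2)).card : ℝ) ≤ 1 := by
              exact_mod_cast hcard
            have := hK0 (Q : ℝ) (Nat.cast_nonneg Q)
            nlinarith
    -- the small odd numbers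
    have hT1 : ∑ n ∈ T.filter (fun n => n ≤ Q - 2), K n ≤
        ∑ m ∈ Finset.Icc 1 M, K ((2 * m + 1 : ℕ) : ℝ) := by
      have hsub1 : T.filter (fun n => n ≤ Q - 2) ⊆
          (Finset.Icc 1 M).image (fun m => 2 * m + 1) := by
        intro n hn
        simp only [hT, Finset.mem_filter, Finset.mem_Icc] at hn
        have h2 := Nat.not_even_iff.mp hn.1.2
        exact Finset.mem_image.mpr
          ⟨(n - 1) / 2, Finset.mem_Icc.mpr ⟨by omega, by omega⟩, by omega⟩
      calc ∑ n ∈ T.filter (fun n => n ≤ Q - 2), K n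
          ≤ ∑ n ∈ ((Finset.Icc 1 M).image (fun m => 2 * m + 1) : Finset ℕ), K n :=
            Finset.sum_le_sum_of_subset_of_nonneg hsub1
              (fun n _ _ => hK0 n (Nat.cast_nonneg n))
        _ = ∑ m ∈ Finset.Icc 1 M, K ((2 * m + 1 : ℕ) : ℝ) :=
            Finset.sum_image (fun x _ y _ h => by omega)
    -- integral comparison
    set a : ℕ → ℝ := fun i => 2 * i + 3 with ha
    have hadj : ∑ i ∈ Finset.range M, ∫ x in (a i)..(a (i+1)), K x = ∫ x in (a 0)..(a M), K x :=
      intervalIntegral.sum_integral_adjacent_intervals (fun k _ => hKint _ _)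
    have hterm : ∀ i : ℕ, 2 * K ((2 * (1 + i) + 1 : ℕ) : ℝ) ≤ ∫ x in (a i)..(a (i+1)), K x := by
      intro i
      have hai : ((2 * (1 + i) + 1 : ℕ) : ℝ) = a i := by
        simp only [ha]; push_cast; ring
      have hab : a i ≤ a (i + 1) := by
        simp only [ha]; push_cast; linarith
      have h0 : (0:ℝ) ≤ a i := by
        simp only [ha]; positivity
      have hmo : ∫ x in (a i)..(a (i+1)), K (a i) ≤ ∫ x in (a i)..(a (i+1)), K x :=
        intervalIntegral.integral_mono_on hab intervalIntegrable_const (hKint _ _)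
          (fun x hx => hKmono _ _ h0 hx.1)
      rw [intervalIntegral.integral_const] at hmo
      have h2 : a (i+1) - a i = 2 := by
        simp only [ha]; push_cast; ring
      rw [h2] at hmo
      rw [hai]
      simpa [smul_eq_mul] using hmo
    have hMQ : ∫ x in (a 0)..(a M), K x ≤ ∫ x in (0:ℝ)..(Q:ℝ), K x := by
      rcases Nat.eq_zero_or_pos M with hM0 | hMpos
      · rw [hM0, intervalIntegral.integral_same]
        exact intervalIntegral.integral_nonneg (Nat.cast_nonneg Q)
          (fun x hx => hK0 x hx.1)
      · have hMQn : 2 * M + 3 ≤ Q := by omega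
        have h03 : (0:ℝ) ≤ a 0 := by simp only [ha]; norm_num
        have haM0 : (0:ℝ) ≤ a M := by simp only [ha]; positivity
        have haM : a M ≤ (Q:ℝ) := by
          simp only [ha]
          have : ((2 * M + 3 : ℕ) : ℝ) ≤ (Q : ℝ) := by exact_mod_cast hMQn
          push_cast at this
          linarith
        have e1 : (∫ x in (0:ℝ)..(a 0), K x) + (∫ x in (a 0)..(a M), K x) =
            ∫ x in (0:ℝ)..(a M), K x :=
          intervalIntegral.integral_add_adjacent_intervals (hKint _ _) (hKint _ _)
        have e2 : (∫ x in (0:ℝ)..(a M), K x) + (∫ x in (a M)..(Q:ℝ), K x) =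
            ∫ x in (0:ℝ)..(Q:ℝ), K x :=
          intervalIntegral.integral_add_adjacent_intervals (hKint _ _) (hKint _ _)
        have n1 : 0 ≤ ∫ x in (0:ℝ)..(a 0), K x :=
          intervalIntegral.integral_nonneg h03 (fun x hx => hK0 x hx.1)
        have n2 : 0 ≤ ∫ x in (a M)..(Q:ℝ), K x :=
          intervalIntegral.integral_nonneg haM (fun x hx => hK0 x (le_trans haM0 hx.1))
        linarith
    have hsum2 : 2 * ∑ m ∈ Finset.Icc 1 M, K ((2 * m + 1 : ℕ) : ℝ) ≤
        ∫ x in (0:ℝ)..(Q:ℝ), K x := by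
      rw [Finset.mul_sum]
      calc ∑ m ∈ Finset.Icc 1 M, 2 * K ((2 * m + 1 : ℕ) : ℝ)
          = ∑ i ∈ Finset.range M, 2 * K ((2 * (1 + i) + 1 : ℕ) : ℝ) := by
            rw [← Finset.Ico_add_one_right_eq_Icc 1 M, Finset.sum_Ico_eq_sum_range]
            simp only [Nat.add_sub_cancel]
        _ ≤ ∑ i ∈ Finset.range M, ∫ x in (a i)..(a (i+1)), K x :=
            Finset.sum_le_sum (fun i _ => hterm i)
        _ = ∫ x in (a 0)..(a M), K x := hadj
        _ ≤ ∫ x in (0:ℝ)..(Q:ℝ), K x := hMQ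
    calc ∑ q ∈ ((Finset.Icc 2 Q).filter IsPrimePow).filter (fun q => ¬ Even q), K q
        ≤ ∑ n ∈ T, K n := h1
      _ = (∑ n ∈ T.filter (fun n => n ≤ Q - 2), K n) +
          ∑ n ∈ T.filter (fun n => ¬ n ≤ Q - 2), K n :=
          (Finset.sum_filter_add_sum_filter_not T _ _).symm
      _ ≤ K Q + (1 / 2) * (∫ x in (0 : ℝ)..(Q : ℝ), K x) := by linarith
  linarith
end

section
/- Fix an integer r ≥ 2 and consider the three functions on integers q ≥ 2: g₀(q) = (q^{r+1} − q)/(q − 1), g₁(q) = (q^{r+1} − q)/(q − 1) − 1, and h(q) = (q^{r+1} − 1)/(q − 1). If q₁ and q₂ are prime powers and f₁, f₂ ∈ {g₀, g₁, h} satisfy f₁(q₁) = f₂(q₂), then q₁ = q₂ and f₁ = f₂. -/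
private lemma S_gap (r q₁ q₂ : ℕ) (hr : 2 ≤ r) (h1 : 2 ≤ q₁) (h12 : q₁ < q₂) :
    (∑ k ∈ Finset.range (r+1), q₁^k) + 3 ≤ ∑ k ∈ Finset.range (r+1), q₂^k := by
  have h2 : (2 : ℕ) ∈ Finset.range (r+1) := by
    simp only [Finset.mem_range]; omega
  rw [← Finset.add_sum_erase _ (fun k => q₁^k) h2,
      ← Finset.add_sum_erase _ (fun k => q₂^k) h2]
  have hq : q₁^2 + 3 ≤ q₂^2 := by nlinarith
  have hsum : ∑ k ∈ (Finset.range (r+1)).erase 2, q₁^k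
      ≤ ∑ k ∈ (Finset.range (r+1)).erase 2, q₂^k :=
    Finset.sum_le_sum (fun i _ => Nat.pow_le_pow_left (le_of_lt h12) i)
  omega

private lemma core (r q₁ q₂ : ℕ) (hr : 2 ≤ r) (h1 : 2 ≤ q₁) (h2 : 2 ≤ q₂)
    (d₁ d₂ : ℚ) (hd₁ : 0 ≤ d₁ ∧ d₁ ≤ 2) (hd₂ : 0 ≤ d₂ ∧ d₂ ≤ 2)
    (heq : ((∑ k ∈ Finset.range (r+1), q₁^k : ℕ) : ℚ) - d₁
         = ((∑ k ∈ Finset.range (r+1), q₂^k : ℕ) : ℚ) - d₂) :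
    q₁ = q₂ ∧ d₁ = d₂ := by
  rcases lt_trichotomy q₁ q₂ with hlt | heqq | hgt
  · exfalso
    have := S_gap r q₁ q₂ hr h1 hlt
    have : ((∑ k ∈ Finset.range (r+1), q₁^k : ℕ) : ℚ) + 3
        ≤ ((∑ k ∈ Finset.range (r+1), q₂^k : ℕ) : ℚ) := by exact_mod_cast this
    linarith [hd₁.1, hd₁.2, hd₂.1, hd₂.2]
  · subst heqq
    exact ⟨rfl, by linarith⟩
  · exfalso
    have := S_gap r q₂ q₁ hr h2 hgt
    have : ((∑ k ∈ Finset.range (r+1), q₂^k : ℕ) : ℚ) + 3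
        ≤ ((∑ k ∈ Finset.range (r+1), q₁^k : ℕ) : ℚ) := by exact_mod_cast this
    linarith [hd₁.1, hd₁.2, hd₂.1, hd₂.2]

private lemma val_h (r q : ℕ) (hq : 2 ≤ q) :
    ((q : ℚ) ^ (r + 1) - 1) / (q - 1) = ((∑ k ∈ Finset.range (r+1), q^k : ℕ) : ℚ) := by
  have hne : (q : ℚ) ≠ 1 := by
    have : (1 : ℚ) < q := by exact_mod_cast hq.trans_lt' one_lt_two
    exact ne_of_gt this
  rw [← geom_sum_eq hne]
  push_cast
  ring

private lemma val_g (r q : ℕ) (hq : 2 ≤ q) :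
    ((q : ℚ) ^ (r + 1) - q) / (q - 1) = ((∑ k ∈ Finset.range (r+1), q^k : ℕ) : ℚ) - 1 := by
  have hne : (q : ℚ) - 1 ≠ 0 := by
    have : (1 : ℚ) < q := by exact_mod_cast hq.trans_lt' one_lt_two
    linarith
  rw [← val_h r q hq]
  field_simp
  ring

theorem linear_small_degrees_determine (r : ℕ) (hr : 2 ≤ r)
    (g₀ g₁ h : ℕ → ℚ)
    (hg₀ : g₀ = fun (q : ℕ) => ((q : ℚ) ^ (r + 1) - q) / (q - 1))
    (hg₁ : g₁ = fun (q : ℕ) => ((q : ℚ) ^ (r + 1) - q) / (q - 1) - 1)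
    (hh : h = fun (q : ℕ) => ((q : ℚ) ^ (r + 1) - 1) / (q - 1))
    (q₁ q₂ : ℕ) (hq₁ : IsPrimePow q₁) (hq₂ : IsPrimePow q₂)
    (f₁ f₂ : ℕ → ℚ)
    (hf₁ : f₁ ∈ ({g₀, g₁, h} : Set (ℕ → ℚ)))
    (hf₂ : f₂ ∈ ({g₀, g₁, h} : Set (ℕ → ℚ)))
    (heq : f₁ q₁ = f₂ q₂) :
    q₁ = q₂ ∧ f₁ = f₂ := by
  have h1 : 2 ≤ q₁ := hq₁.two_le
  have h2 : 2 ≤ q₂ := hq₂.two_le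
  have e0 : ∀ q : ℕ, 2 ≤ q → g₀ q = ((∑ k ∈ Finset.range (r+1), q^k : ℕ) : ℚ) - 1 := by
    intro q hq; rw [hg₀]; exact val_g r q hq
  have e1 : ∀ q : ℕ, 2 ≤ q → g₁ q = ((∑ k ∈ Finset.range (r+1), q^k : ℕ) : ℚ) - 2 := by
    intro q hq; rw [hg₁]; simp only; rw [val_g r q hq]; ring
  have eh : ∀ q : ℕ, 2 ≤ q → h q = ((∑ k ∈ Finset.range (r+1), q^k : ℕ) : ℚ) - 0 := by
    intro q hq; rw [hh]; simp only; rw [val_h r q hq]; ring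
  simp only [Set.mem_insert_iff, Set.mem_singleton_iff] at hf₁ hf₂
  rcases hf₁ with rfl | rfl | rfl <;> rcases hf₂ with rfl | rfl | rfl <;>
    [rw [e0 q₁ h1, e0 q₂ h2] at heq;
     rw [e0 q₁ h1, e1 q₂ h2] at heq;
     rw [e0 q₁ h1, eh q₂ h2] at heq;
     rw [e1 q₁ h1, e0 q₂ h2] at heq;
     rw [e1 q₁ h1, e1 q₂ h2] at heq;
     rw [e1 q₁ h1, eh q₂ h2] at heq;
     rw [eh q₁ h1, e0 q₂ h2] at heq;
     rw [eh q₁ h1, e1 q₂ h2] at heq;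
     rw [eh q₁ h1, eh q₂ h2] at heq] <;>
  · obtain ⟨hq, hd⟩ := core r q₁ q₂ hr h1 h2 _ _ (by norm_num) (by norm_num) heq
    first
      | exact ⟨hq, rfl⟩
      | (exfalso; norm_num at hd)
end

section
/- Fix an integer r ≥ 2 and consider the two functions on integers q ≥ 2: u(q) = (q^{r+1} − q·(−1)^r)/(q + 1) and v(q) = (q^{r+1} + (−1)^r)/(q + 1). If q₁ and q₂ are prime powers and f₁, f₂ ∈ {u, v} satisfy f₁(q₁) = f₂(q₂), then q₁ = q₂ and f₁ = f₂. -/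
lemma sep_nat' (s x y : ℕ) (hs : 1 ≤ s) (hx : 2 ≤ x) (hxy : x < y) :
    x ^ (s + 1) + y ^ s + 1 < y ^ (s + 1) := by
  have h1 : x ^ s + 1 ≤ (x + 1) ^ s :=
    Nat.pow_lt_pow_left (Nat.lt_succ_self x) (by omega)
  have h2 : (x + 1) ^ s ≤ y ^ s := Nat.pow_le_pow_left (by omega) s
  have h3 : y ^ s * (x + 1) ≤ y ^ s * y := Nat.mul_le_mul_left _ (by omega)
  have h4 : (x ^ s + 1) * x ≤ (x + 1) ^ s * x := Nat.mul_le_mul_right _ h1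
  have h5 : (x + 1) ^ s * x ≤ y ^ s * x := Nat.mul_le_mul_right _ h2
  have e1 : y ^ (s + 1) = y ^ s * y := pow_succ _ _
  have e2 : x ^ (s + 1) = x ^ s * x := pow_succ _ _
  nlinarith

lemma sep_q' (s x y : ℕ) (hs : 1 ≤ s) (hx : 2 ≤ x) (hxy : x < y) :
    (x : ℚ) ^ (s + 1) < (y : ℚ) ^ (s + 1) - (y : ℚ) ^ s - 1 := by
  have := sep_nat' s x y hs hx hxy
  have : ((x ^ (s + 1) + y ^ s + 1 : ℕ) : ℚ) < ((y ^ (s + 1) : ℕ) : ℚ) := by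
    exact_mod_cast this
  push_cast at this
  linarith

lemma bounds_q' (s q : ℕ) (hq : 2 ≤ q) (e : ℚ) (he : |e| ≤ q) :
    (q : ℚ) ^ (s + 1) - (q : ℚ) ^ s - 1 ≤ ((q : ℚ) ^ (s + 2) + e) / ((q : ℚ) + 1) ∧
      ((q : ℚ) ^ (s + 2) + e) / ((q : ℚ) + 1) ≤ (q : ℚ) ^ (s + 1) := by
  have hq1 : (2 : ℚ) ≤ (q : ℚ) := by exact_mod_cast hq
  have hq' : (0 : ℚ) < (q : ℚ) + 1 := by linarith
  have h0 : (0 : ℚ) ≤ (q : ℚ) ^ s := by positivity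
  have he1 : -(q : ℚ) ≤ e := by
    have := neg_abs_le e; linarith
  have he2 : e ≤ q := le_trans (le_abs_self e) he
  have hpow : (q : ℚ) ≤ (q : ℚ) ^ (s + 1) := by
    calc (q : ℚ) = (q : ℚ) ^ 1 := (pow_one _).symm
    _ ≤ (q : ℚ) ^ (s + 1) := pow_le_pow_right₀ (by linarith) (by omega)
  have e1 : (q : ℚ) ^ (s + 1) = (q : ℚ) ^ s * q := pow_succ _ _
  have e2 : (q : ℚ) ^ (s + 2) = (q : ℚ) ^ (s + 1) * q := pow_succ _ _
  constructor
  · rw [le_div_iff₀ hq']; nlinarith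
  · rw [div_le_iff₀ hq']; nlinarith

theorem unitary_small_degrees_determine (r : ℕ) (hr : 2 ≤ r)
    (u v : ℕ → ℚ)
    (hu : u = fun (q : ℕ) => ((q : ℚ) ^ (r + 1) - q * (-1 : ℚ) ^ r) / (q + 1))
    (hv : v = fun (q : ℕ) => ((q : ℚ) ^ (r + 1) + (-1 : ℚ) ^ r) / (q + 1))
    (q₁ q₂ : ℕ) (hq₁ : IsPrimePow q₁) (hq₂ : IsPrimePow q₂)
    (f₁ f₂ : ℕ → ℚ)
    (hf₁ : f₁ ∈ ({u, v} : Set (ℕ → ℚ)))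
    (hf₂ : f₂ ∈ ({u, v} : Set (ℕ → ℚ)))
    (heq : f₁ q₁ = f₂ q₂) :
    q₁ = q₂ ∧ f₁ = f₂ := by
  obtain ⟨s, rfl⟩ : ∃ s, r = s + 1 := ⟨r - 1, by omega⟩
  have hs : 1 ≤ s := by omega
  have h2q₁ : 2 ≤ q₁ := hq₁.two_le
  have h2q₂ : 2 ≤ q₂ := hq₂.two_le
  -- every f ∈ {u, v} has form (q^(s+2) + e)/(q+1) with |e| ≤ q
  have hform : ∀ f ∈ ({u, v} : Set (ℕ → ℚ)), ∀ q : ℕ, 2 ≤ q →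
      ∃ e : ℚ, |e| ≤ q ∧ f q = ((q : ℚ) ^ (s + 2) + e) / ((q : ℚ) + 1) := by
    rintro f hf q hq
    have hq1 : (1 : ℚ) ≤ (q : ℚ) := by exact_mod_cast le_trans one_le_two hq
    have habs : |(-1 : ℚ) ^ (s + 1)| = 1 := by
      rw [abs_pow, abs_neg, abs_one, one_pow]
    rcases hf with rfl | rfl
    · refine ⟨-(q : ℚ) * (-1 : ℚ) ^ (s + 1), ?_, ?_⟩
      · rw [abs_mul, habs, mul_one, abs_neg, abs_of_nonneg (by linarith)]
      · rw [hu]; ring_nf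
    · refine ⟨(-1 : ℚ) ^ (s + 1), ?_, ?_⟩
      · rw [habs]; linarith
      · rw [hv]
  -- strict ordering across distinct q
  have key : ∀ g₁ ∈ ({u, v} : Set (ℕ → ℚ)), ∀ g₂ ∈ ({u, v} : Set (ℕ → ℚ)),
      ∀ a b : ℕ, 2 ≤ a → a < b → g₁ a < g₂ b := by
    rintro g₁ hg₁ g₂ hg₂ a b ha hab
    obtain ⟨e₁, he₁, hge₁⟩ := hform g₁ hg₁ a ha
    obtain ⟨e₂, he₂, hge₂⟩ := hform g₂ hg₂ b (by omega)
    have B₁ := (bounds_q' s a ha e₁ he₁).2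
    have B₂ := (bounds_q' s b (by omega) e₂ he₂).1
    have S := sep_q' s a b hs ha hab
    rw [hge₁, hge₂]
    linarith
  -- u q ≠ v q
  have hne : ∀ q : ℕ, 2 ≤ q → u q ≠ v q := by
    intro q hq h
    rw [hu, hv] at h
    simp only at h
    have hq' : ((q : ℚ) + 1) ≠ 0 := by positivity
    rw [div_eq_div_iff hq' hq'] at h
    have hc : ((-1 : ℚ)) ^ (s + 1) ≠ 0 := pow_ne_zero _ (by norm_num)
    have h0 : ((q : ℚ) + 1) ^ 2 * ((-1 : ℚ) ^ (s + 1)) = 0 := by linear_combination -h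
    rcases mul_eq_zero.1 h0 with h1 | h1
    · have : (0 : ℚ) < ((q : ℚ) + 1) ^ 2 := by positivity
      linarith
    · exact hc h1
  -- q₁ = q₂
  have hq : q₁ = q₂ := by
    rcases lt_trichotomy q₁ q₂ with h | h | h
    · exact absurd heq (ne_of_lt (key f₁ hf₁ f₂ hf₂ q₁ q₂ h2q₁ h))
    · exact h
    · exact absurd heq.symm (ne_of_lt (key f₂ hf₂ f₁ hf₁ q₂ q₁ h2q₂ h))
  subst hq
  refine ⟨rfl, ?_⟩
  rcases hf₁ with rfl | rfl <;> rcases hf₂ with rfl | rfl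
  · rfl
  · exact absurd heq (hne q₁ h2q₁)
  · exact absurd heq.symm (hne q₁ h2q₁)
  · rfl
end

section
/- For an integer q of the form q = 2^{2k+1} with k ≥ 2, write √(2q) = 2^{k+1} and consider the five functions b₁(q) = (q − √(2q) + 1)(q − 1), b₂(q) = q² − 1, b₃(q) = q², b₄(q) = q² + 1, b₅(q) = (q + √(2q) + 1)(q − 1). Then: (i) (3/4)·q² < b_i(q) < 2q² for each i; and (ii) if q₁ = 2^{2k₁+1}, q₂ = 2^{2k₂+1} with k₁, k₂ ≥ 2 and b_i(q₁) = b_j(q₂) for some i, j, then q₁ = q₂ and i = j. -/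
/-- The degrees of the irreducible characters of the Suzuki group `²B₂(q)`, `q = 2^(2k+1)`,
other than the two of degree `(q - 1)√(q/2)`; here `√(2q) = 2^(k+1)`. -/
def suzukiDeg : Fin 5 → ℕ → ℚ
  | 0, K => ((2 : ℚ) ^ (2 * K + 1) - 2 ^ (K + 1) + 1) * ((2 : ℚ) ^ (2 * K + 1) - 1)
  | 1, K => ((2 : ℚ) ^ (2 * K + 1)) ^ 2 - 1
  | 2, K => ((2 : ℚ) ^ (2 * K + 1)) ^ 2
  | 3, K => ((2 : ℚ) ^ (2 * K + 1)) ^ 2 + 1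
  | 4, K => ((2 : ℚ) ^ (2 * K + 1) + 2 ^ (K + 1) + 1) * ((2 : ℚ) ^ (2 * K + 1) - 1)

lemma sz_sq (K : ℕ) : (2:ℚ)^(K+1) * (2:ℚ)^(K+1) = 2 * (2:ℚ)^(2*K+1) := by
  rw [← pow_add, ← pow_succ']; ring_nf

lemma sz_4s (K : ℕ) (hK : 2 ≤ K) : 4 * (2:ℚ)^(K+1) ≤ (2:ℚ)^(2*K+1) := by
  have : (4:ℚ) * 2^(K+1) = 2^(K+3) := by rw [pow_add]; ring
  rw [this]
  exact pow_le_pow_right₀ one_le_two (by omega)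

lemma sz_8 (K : ℕ) (hK : 2 ≤ K) : (8:ℚ) ≤ (2:ℚ)^(K+1) := by
  calc (8:ℚ) = 2^3 := by norm_num
  _ ≤ 2^(K+1) := pow_le_pow_right₀ one_le_two (by omega)

lemma sz_bounds (K : ℕ) (hK : 2 ≤ K) (i : Fin 5) :
    (3 / 4 : ℚ) * ((2 : ℚ) ^ (2 * K + 1)) ^ 2 < suzukiDeg i K ∧
      suzukiDeg i K < 2 * ((2 : ℚ) ^ (2 * K + 1)) ^ 2 := by
  have h1 := sz_sq K
  have h2 := sz_4s K hK
  have h3 := sz_8 K hK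
  fin_cases i <;> simp only [suzukiDeg] <;> constructor <;> nlinarith [sq_nonneg ((2:ℚ)^(2*K+1))]

lemma sz_kk (K₁ K₂ : ℕ) (h₁ : 2 ≤ K₁) (h₂ : 2 ≤ K₂) (i j : Fin 5)
    (h : suzukiDeg i K₁ = suzukiDeg j K₂) : K₁ = K₂ := by
  by_contra hne
  have hb₁ := sz_bounds K₁ h₁ i
  have hb₂ := sz_bounds K₂ h₂ j
  rcases Nat.lt_or_ge K₁ K₂ with hlt | hge
  · have hm : 4 * (2:ℚ)^(2*K₁+1) ≤ (2:ℚ)^(2*K₂+1) := by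
      have : (4:ℚ) * 2^(2*K₁+1) = 2^(2*K₁+3) := by rw [pow_add]; ring
      rw [this]
      exact pow_le_pow_right₀ one_le_two (by omega)
    have hp : (0:ℚ) < (2:ℚ)^(2*K₁+1) := by positivity
    nlinarith [hb₁.2, hb₂.1, h]
  · have hlt : K₂ < K₁ := by omega
    have hm : 4 * (2:ℚ)^(2*K₂+1) ≤ (2:ℚ)^(2*K₁+1) := by
      have : (4:ℚ) * 2^(2*K₂+1) = 2^(2*K₂+3) := by rw [pow_add]; ring
      rw [this]
      exact pow_le_pow_right₀ one_le_two (by omega)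
    have hp : (0:ℚ) < (2:ℚ)^(2*K₂+1) := by positivity
    nlinarith [hb₁.1, hb₂.2, h]

theorem suzuki_degrees_determine :
    (∀ K : ℕ, 2 ≤ K → ∀ i : Fin 5,
      (3 / 4 : ℚ) * ((2 : ℚ) ^ (2 * K + 1)) ^ 2 < suzukiDeg i K ∧
        suzukiDeg i K < 2 * ((2 : ℚ) ^ (2 * K + 1)) ^ 2) ∧
    (∀ K₁ K₂ : ℕ, 2 ≤ K₁ → 2 ≤ K₂ → ∀ i j : Fin 5,
      suzukiDeg i K₁ = suzukiDeg j K₂ →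
        (2 : ℕ) ^ (2 * K₁ + 1) = 2 ^ (2 * K₂ + 1) ∧ i = j) := by
  refine ⟨fun K hK i => sz_bounds K hK i, fun K₁ K₂ h₁ h₂ i j h => ?_⟩
  have hK : K₁ = K₂ := sz_kk K₁ K₂ h₁ h₂ i j h
  subst hK
  refine ⟨rfl, ?_⟩
  have h1 := sz_sq K₁
  have h2 := sz_4s K₁ h₁
  have h3 := sz_8 K₁ h₁
  fin_cases i <;> fin_cases j <;> simp only [suzukiDeg] at h <;>
    first
      | rfl
      | (exfalso; nlinarith [h, sq_nonneg ((2:ℚ)^(2*K₁+1))])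
end
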